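/- Non-stretching property of coordinate-wise random rounding in ℓ₁: For each coordinate i ∈ {1,…,k}, independently choose ψᵢ uniformly from {ψ⁺, ψ⁻} (rounding odd integers up or down to even integers, fixing even integers), and let Ψ : ℤ^k → (2ℤ)^k apply ψᵢ to coordinate i. Then for all x, y ∈ ℤ^k, E[‖Ψ(x) − Ψ(y)‖₁] ≤ ‖x − y‖₁. -/

import Mathlib

lemma stmt11_key (a b : ℤ) :
    |(if Even a then a else a + 1) - (if Even b then b else b + 1)| +
    |(if Even a then a else a - 1) - (if Even b then b else b - 1)| ≤ 2 * |a - b| := by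
  simp only [Int.even_iff]
  split_ifs <;> simp only [Int.abs_eq_natAbs] <;> omega

lemma stmt11_sum (k : ℕ) (i : Fin k) (g : Bool → ℝ) :
    ∑ s : Fin k → Bool, g (s i) = 2 ^ (k - 1) * (g true + g false) := by
  rw [← (Equiv.piSplitAt i (fun _ => Bool)).symm.sum_comp]
  simp [Equiv.piSplitAt, Fintype.sum_prod_type, Fintype.card_fun]
  ring

/-- Non-stretching of coordinate-wise independent random rounding in `ℓ₁`:
averaging over all `2^k` choices of rounding each coordinate's odd integers up or
down, the expected `ℓ₁` distance does not increase. -/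
theorem stmt11 (k : ℕ) (ψp ψm : ℤ → ℤ)
    (hψp : ∀ a, ψp a = if Even a then a else a + 1)
    (hψm : ∀ a, ψm a = if Even a then a else a - 1)
    (Ψ : (Fin k → Bool) → (Fin k → ℤ) → (Fin k → ℤ))
    (hΨ : ∀ s x i, Ψ s x i = if s i then ψp (x i) else ψm (x i))
    (x y : Fin k → ℤ) :
    (1 / 2 ^ k : ℝ) * ∑ s : Fin k → Bool, ∑ i, |(Ψ s x i : ℝ) - (Ψ s y i : ℝ)| ≤
      ∑ i, |(x i : ℝ) - (y i : ℝ)| := by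
  rw [Finset.sum_comm]
  rw [Finset.mul_sum]
  apply Finset.sum_le_sum
  intro i _
  have hk : 1 ≤ k := i.pos
  -- rewrite the inner sum using the factorization lemma
  set g : Bool → ℝ := fun b =>
    |((if b then ψp (x i) else ψm (x i) : ℤ) : ℝ) -
      ((if b then ψp (y i) else ψm (y i) : ℤ) : ℝ)| with hg
  have h1 : ∑ s : Fin k → Bool, |(Ψ s x i : ℝ) - (Ψ s y i : ℝ)|
      = ∑ s : Fin k → Bool, g (s i) := by
    apply Finset.sum_congr rfl
    intro s _
    rw [hΨ, hΨ, hg]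
  rw [h1, stmt11_sum k i g]
  have hZ : |ψp (x i) - ψp (y i)| + |ψm (x i) - ψm (y i)| ≤ 2 * |x i - y i| := by
    rw [hψp, hψp, hψm, hψm]
    exact stmt11_key (x i) (y i)
  have hR : g true + g false ≤ 2 * |(x i : ℝ) - (y i : ℝ)| := by
    simp only [hg, if_true, if_false, Bool.false_eq_true]
    have := (Int.cast_le (R := ℝ)).2 hZ
    push_cast at this
    exact this
  calc (1 / 2 ^ k : ℝ) * (2 ^ (k - 1) * (g true + g false))
      ≤ (1 / 2 ^ k : ℝ) * (2 ^ (k - 1) * (2 * |(x i : ℝ) - (y i : ℝ)|)) := by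
        apply mul_le_mul_of_nonneg_left (mul_le_mul_of_nonneg_left hR (by positivity)) (by positivity)
    _ = |(x i : ℝ) - (y i : ℝ)| := by
        have : (2 : ℝ) ^ (k - 1) * 2 = 2 ^ k := by
          rw [← pow_succ]
          congr 1
          omega
        field_simp
        rw [← this]
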